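/- The set F of points of the generalized Fermat curve C^k(λ) ⊂ ℙ^n(ℂ) having at least one vanishing homogeneous coordinate (i.e., points represented by nonzero solutions x with x_j = 0 for some j ∈ {0,…,n}) is a finite set with exactly (n+1)·k^{n-1} elements. -/

import Mathlib

noncomputable section

/-- A solution of the generalized Fermat system of type `(k,n)`:
`x₀^k + x₁^k + x₂^k = 0` and `λ_j·x₀^k + x₁^k + x_{j+2}^k = 0` for `j = 1, …, n-2`
(here `lam` is 0-indexed, so `lam j` is `λ_{j+1}` and the last variable index is `j+3`). -/
def gfSol (k n : ℕ) (hn : 3 ≤ n) (lam : Fin (n - 2) → ℂ) (x : Fin (n + 1) → ℂ) : Prop :=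
  x ⟨0, by omega⟩ ^ k + x ⟨1, by omega⟩ ^ k + x ⟨2, by omega⟩ ^ k = 0 ∧
    ∀ j : Fin (n - 2),
      lam j * x ⟨0, by omega⟩ ^ k + x ⟨1, by omega⟩ ^ k +
        x ⟨(j : ℕ) + 3, by have := j.2; omega⟩ ^ k = 0

namespace GF

open Polynomial

variable (k n : ℕ) (hn : 3 ≤ n) (lam : Fin (n - 2) → ℂ)

/-- Extension of `lam` to `ℕ`. -/
def lamE (j : ℕ) : ℂ := if h : j < n - 2 then lam ⟨j, h⟩ else 0

/-- First coefficient of the linear form expressing `x_i^k` in terms of `x_0^k, x_1^k`. -/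
def cc0 (i : ℕ) : ℂ :=
  if i = 0 then 1 else if i = 1 then 0 else if i = 2 then -1 else -(lamE n lam (i - 3))

/-- Second coefficient. -/
def cc1 (i : ℕ) : ℂ := if i = 0 then 0 else if i = 1 then 1 else -1

lemma cc0_eval {i : ℕ} (h3 : 3 ≤ i) (h : i - 3 < n - 2) :
    cc0 n lam i = -(lam ⟨i - 3, h⟩) := by
  unfold cc0 lamE
  rw [if_neg (by omega), if_neg (by omega), if_neg (by omega), dif_pos h]

lemma cc1_eval2 {i : ℕ} (h2 : 2 ≤ i) : cc1 i = -1 := by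
  unfold cc1; rw [if_neg (by omega), if_neg (by omega)]

lemma cc0_0 : cc0 n lam 0 = 1 := by norm_num [cc0]
lemma cc0_1 : cc0 n lam 1 = 0 := by norm_num [cc0]
lemma cc0_2 : cc0 n lam 2 = -1 := by norm_num [cc0]
lemma cc1_0 : cc1 0 = 0 := by norm_num [cc1]
lemma cc1_1 : cc1 1 = 1 := by norm_num [cc1]

lemma sol_iff (x : Fin (n + 1) → ℂ) :
    gfSol k n hn lam x ↔
      ∀ i : Fin (n + 1), x i ^ k =
        cc0 n lam (i : ℕ) * x ⟨0, by omega⟩ ^ k + cc1 (i : ℕ) * x ⟨1, by omega⟩ ^ k := by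
  constructor
  · rintro ⟨h2, hj⟩ ⟨i, hi⟩
    rcases Nat.lt_or_ge i 3 with h3 | h3
    · interval_cases i
      · simp [cc0, cc1]
      · simp [cc0, cc1]
      · show x ⟨2, by omega⟩ ^ k = cc0 n lam 2 * x ⟨0, by omega⟩ ^ k + cc1 2 * x ⟨1, by omega⟩ ^ k
        rw [cc0_2, cc1_eval2 (by norm_num)]
        linear_combination h2
    · have hlt : i - 3 < n - 2 := by omega
      have hj' : lam ⟨i - 3, hlt⟩ * x ⟨0, by omega⟩ ^ k + x ⟨1, by omega⟩ ^ k +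
          x ⟨i - 3 + 3, by omega⟩ ^ k = 0 := hj ⟨i - 3, hlt⟩
      have e : (⟨i - 3 + 3, by omega⟩ : Fin (n + 1)) = ⟨i, hi⟩ := by
        apply Fin.ext; simp; omega
      rw [e] at hj'
      show x ⟨i, hi⟩ ^ k = cc0 n lam i * x ⟨0, by omega⟩ ^ k + cc1 i * x ⟨1, by omega⟩ ^ k
      rw [cc0_eval n lam h3 hlt, cc1_eval2 (by omega)]
      linear_combination hj'
  · intro h
    constructor
    · have h2 : x ⟨2, by omega⟩ ^ k =
          cc0 n lam 2 * x ⟨0, by omega⟩ ^ k + cc1 2 * x ⟨1, by omega⟩ ^ k := h ⟨2, by omega⟩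
      rw [cc0_2, cc1_eval2 (by norm_num)] at h2
      linear_combination h2
    · intro j
      have hj : x ⟨(j : ℕ) + 3, by have := j.2; omega⟩ ^ k =
          cc0 n lam ((j : ℕ) + 3) * x ⟨0, by omega⟩ ^ k +
            cc1 ((j : ℕ) + 3) * x ⟨1, by omega⟩ ^ k :=
        h ⟨(j : ℕ) + 3, by have := j.2; omega⟩
      have hlt : (j : ℕ) + 3 - 3 < n - 2 := by have := j.2; omega
      rw [cc0_eval n lam (by omega) hlt, cc1_eval2 (by omega)] at hj
      have he : (⟨(j : ℕ) + 3 - 3, hlt⟩ : Fin (n - 2)) = j := Fin.ext (by simp only [Fin.val_mk]; omega)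
      rw [he] at hj
      linear_combination hj

lemma det_ne (hl0 : ∀ j, lam j ≠ 0) (hl1 : ∀ j, lam j ≠ 1) (hinj : Function.Injective lam)
    {i i' : ℕ} (hi : i ≤ n) (hi' : i' ≤ n) (hne : i ≠ i') :
    cc0 n lam i * cc1 i' - cc1 i * cc0 n lam i' ≠ 0 := by
  rcases Nat.lt_or_ge i 3 with h3 | h3 <;> rcases Nat.lt_or_ge i' 3 with h3' | h3'
  · interval_cases i <;> interval_cases i' <;>
      simp_all [cc0, cc1] <;> norm_num
  · have hlt' : i' - 3 < n - 2 := by omega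
    rw [cc0_eval n lam h3' hlt', cc1_eval2 (show 2 ≤ i' by omega)]
    interval_cases i
    · rw [cc0_0, cc1_0]; norm_num
    · rw [cc0_1, cc1_1]
      norm_num
      exact hl0 _
    · rw [cc0_2, cc1_eval2 (by norm_num)]
      intro hcon
      exact (hl1 ⟨i' - 3, hlt'⟩) (by linear_combination -hcon)
  · have hlt : i - 3 < n - 2 := by omega
    rw [cc0_eval n lam h3 hlt, cc1_eval2 (show 2 ≤ i by omega)]
    interval_cases i'
    · rw [cc0_0, cc1_0]; norm_num
    · rw [cc0_1, cc1_1]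
      norm_num
      exact hl0 _
    · rw [cc0_2, cc1_eval2 (by norm_num)]
      intro hcon
      exact (hl1 ⟨i - 3, hlt⟩) (by linear_combination hcon)
  · have hlt : i - 3 < n - 2 := by omega
    have hlt' : i' - 3 < n - 2 := by omega
    rw [cc0_eval n lam h3 hlt, cc0_eval n lam h3' hlt',
      cc1_eval2 (show 2 ≤ i by omega), cc1_eval2 (show 2 ≤ i' by omega)]
    intro hcon
    have : lam ⟨i - 3, hlt⟩ = lam ⟨i' - 3, hlt'⟩ := by linear_combination hcon
    have := hinj this
    rw [Fin.mk.injEq] at this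
    omega

/-- A nonzero solution cannot have two vanishing coordinates. -/
lemma unique_zero (hk : 0 < k) (hl0 : ∀ j, lam j ≠ 0) (hl1 : ∀ j, lam j ≠ 1)
    (hinj : Function.Injective lam) {x : Fin (n + 1) → ℂ}
    (hsol : gfSol k n hn lam x) (hx : x ≠ 0) {i i' : Fin (n + 1)}
    (hzi : x i = 0) (hzi' : x i' = 0) : i = i' := by
  by_contra hne
  have H := (sol_iff k n hn lam x).mp hsol
  set y0 := x ⟨0, by omega⟩ ^ k with hy0
  set y1 := x ⟨1, by omega⟩ ^ k with hy1
  have e1 : (0 : ℂ) = cc0 n lam (i : ℕ) * y0 + cc1 (i : ℕ) * y1 := by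
    have := H i; rw [hzi, zero_pow (by omega)] at this; exact this
  have e2 : (0 : ℂ) = cc0 n lam (i' : ℕ) * y0 + cc1 (i' : ℕ) * y1 := by
    have := H i'; rw [hzi', zero_pow (by omega)] at this; exact this
  have hD : cc0 n lam (i : ℕ) * cc1 (i' : ℕ) - cc1 (i : ℕ) * cc0 n lam (i' : ℕ) ≠ 0 :=
    det_ne n lam hl0 hl1 hinj (by omega) (by omega)
      (fun h => hne (Fin.ext h))
  have h0 : y0 = 0 := by
    have : (cc0 n lam (i : ℕ) * cc1 (i' : ℕ) - cc1 (i : ℕ) * cc0 n lam (i' : ℕ)) * y0 = 0 := by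
      linear_combination cc1 (i : ℕ) * e2 - cc1 (i' : ℕ) * e1
    exact (mul_eq_zero.mp this).resolve_left hD
  have h1 : y1 = 0 := by
    have : (cc0 n lam (i : ℕ) * cc1 (i' : ℕ) - cc1 (i : ℕ) * cc0 n lam (i' : ℕ)) * y1 = 0 := by
      linear_combination cc0 n lam (i' : ℕ) * e1 - cc0 n lam (i : ℕ) * e2
    exact (mul_eq_zero.mp this).resolve_left hD
  apply hx
  funext j
  have := H j
  rw [h0, h1] at this
  simp only [mul_zero, add_zero] at this
  exact pow_eq_zero_iff (by omega) |>.mp this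

/-- `dd m i` is the value of the `i`-th linear form on the spanning vector of the kernel of
the `m`-th linear form. -/
def dd (m i : ℕ) : ℂ := cc0 n lam i * cc1 m - cc1 i * cc0 n lam m

lemma dd_id (m i : ℕ) : dd n lam m i = cc0 n lam i * dd n lam m 0 + cc1 i * dd n lam m 1 := by
  simp only [dd, cc0_0, cc0_1, cc1_0, cc1_1]
  ring

lemma dd_self (m : ℕ) : dd n lam m m = 0 := by simp [dd]; ring

lemma dd_ne (hl0 : ∀ j, lam j ≠ 0) (hl1 : ∀ j, lam j ≠ 1) (hinj : Function.Injective lam)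
    {m i : ℕ} (hm : m ≤ n) (hi : i ≤ n) (hne : i ≠ m) : dd n lam m i ≠ 0 :=
  det_ne n lam hl0 hl1 hinj hi hm hne

/-- A chosen `k`-th root of `dd m i`. -/
def rr (hk : 0 < k) (m i : ℕ) : ℂ :=
  Classical.choose (IsAlgClosed.exists_pow_nat_eq (dd n lam m i) hk)

lemma rr_pow (hk : 0 < k) (m i : ℕ) : rr k n lam hk m i ^ k = dd n lam m i :=
  Classical.choose_spec (IsAlgClosed.exists_pow_nat_eq (dd n lam m i) hk)

lemma rr_self (hk : 0 < k) (m : ℕ) : rr k n lam hk m m = 0 := by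
  have := rr_pow k n lam hk m m
  rw [dd_self] at this
  exact pow_eq_zero_iff (by omega) |>.mp this

lemma rr_ne (hk : 0 < k) (hl0 : ∀ j, lam j ≠ 0) (hl1 : ∀ j, lam j ≠ 1)
    (hinj : Function.Injective lam) {m i : ℕ} (hm : m ≤ n) (hi : i ≤ n) (hne : i ≠ m) :
    rr k n lam hk m i ≠ 0 := by
  intro h
  have := rr_pow k n lam hk m i
  rw [h, zero_pow (by omega)] at this
  exact dd_ne n lam hl0 hl1 hinj hm hi hne this.symm

/-- The normalization index: some index different from `m`. -/
def idx1 (m : Fin (n + 1)) : Fin (n + 1) :=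
  if (m : ℕ) = 0 then ⟨1, by omega⟩ else ⟨0, by omega⟩

lemma idx1_ne (m : Fin (n + 1)) : idx1 n hn m ≠ m := by
  unfold idx1
  split <;> (apply Fin.ne_of_val_ne; simp; omega)

/-- The standard representative with `m`-th coordinate zero, coordinates twisted by `ζ`. -/
def ww (hk : 0 < k) (m : Fin (n + 1))
    (ζ : {i : Fin (n + 1) // i ≠ m ∧ i ≠ idx1 n hn m} → ℂ) (i : Fin (n + 1)) : ℂ :=
  (if h : i ≠ m ∧ i ≠ idx1 n hn m then ζ ⟨i, h⟩ else 1) * rr k n lam hk (m : ℕ) (i : ℕ)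

lemma ww_pow (hk : 0 < k) (m : Fin (n + 1))
    (ζ : {i : Fin (n + 1) // i ≠ m ∧ i ≠ idx1 n hn m} → ℂ) (hζ : ∀ p, ζ p ^ k = 1)
    (i : Fin (n + 1)) : ww k n hn lam hk m ζ i ^ k = dd n lam (m : ℕ) (i : ℕ) := by
  unfold ww
  rw [mul_pow]
  split
  · rw [hζ, one_mul, rr_pow]
  · rw [one_pow, one_mul, rr_pow]

lemma ww_m (hk : 0 < k) (m : Fin (n + 1))
    (ζ : {i : Fin (n + 1) // i ≠ m ∧ i ≠ idx1 n hn m} → ℂ) :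
    ww k n hn lam hk m ζ m = 0 := by
  unfold ww
  rw [rr_self, mul_zero]

lemma ww_idx1 (hk : 0 < k) (m : Fin (n + 1))
    (ζ : {i : Fin (n + 1) // i ≠ m ∧ i ≠ idx1 n hn m} → ℂ) :
    ww k n hn lam hk m ζ (idx1 n hn m) = rr k n lam hk (m : ℕ) ((idx1 n hn m : ℕ)) := by
  unfold ww
  rw [dif_neg (by simp), one_mul]

lemma ww_sol (hk : 0 < k) (m : Fin (n + 1))
    (ζ : {i : Fin (n + 1) // i ≠ m ∧ i ≠ idx1 n hn m} → ℂ) (hζ : ∀ p, ζ p ^ k = 1) :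
    gfSol k n hn lam (ww k n hn lam hk m ζ) := by
  rw [sol_iff]
  intro i
  rw [ww_pow k n hn lam hk m ζ hζ, ww_pow k n hn lam hk m ζ hζ, ww_pow k n hn lam hk m ζ hζ]
  exact dd_id n lam (m : ℕ) (i : ℕ)

lemma ww_ne (hk : 0 < k) (hl0 : ∀ j, lam j ≠ 0) (hl1 : ∀ j, lam j ≠ 1)
    (hinj : Function.Injective lam) (m : Fin (n + 1))
    (ζ : {i : Fin (n + 1) // i ≠ m ∧ i ≠ idx1 n hn m} → ℂ) :
    ww k n hn lam hk m ζ ≠ 0 := by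
  intro h
  have h1 := congrFun h (idx1 n hn m)
  rw [ww_idx1] at h1
  exact rr_ne k n lam hk hl0 hl1 hinj (by omega) (by omega)
    (fun hc => idx1_ne n hn m (Fin.ext hc)) h1

end GF

open GF Polynomial in
theorem generalized_fermat_fixed_point_count_total (k n : ℕ) (hk : 2 ≤ k) (hn : 3 ≤ n)
    (lam : Fin (n - 2) → ℂ) (hl0 : ∀ j, lam j ≠ 0) (hl1 : ∀ j, lam j ≠ 1)
    (hinj : Function.Injective lam) :
    {p : Projectivization ℂ (Fin (n + 1) → ℂ) |
        ∃ (x : Fin (n + 1) → ℂ) (hx : x ≠ 0),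
          gfSol k n hn lam x ∧ (∃ j, x j = 0) ∧ p = Projectivization.mk ℂ x hx}.Finite ∧
      {p : Projectivization ℂ (Fin (n + 1) → ℂ) |
        ∃ (x : Fin (n + 1) → ℂ) (hx : x ≠ 0),
          gfSol k n hn lam x ∧ (∃ j, x j = 0) ∧ p = Projectivization.mk ℂ x hx}.ncard =
        (n + 1) * k ^ (n - 1) := by
  have hk0 : 0 < k := by omega
  set S := {p : Projectivization ℂ (Fin (n + 1) → ℂ) |
      ∃ (x : Fin (n + 1) → ℂ) (hx : x ≠ 0),
        gfSol k n hn lam x ∧ (∃ j, x j = 0) ∧ p = Projectivization.mk ℂ x hx} with hS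
  -- the parameter type
  let T : Fin (n + 1) → Type :=
    fun m => {i : Fin (n + 1) // i ≠ m ∧ i ≠ idx1 n hn m} → (nthRootsFinset k (1 : ℂ))
  -- the parametrization map
  let F : (Σ m : Fin (n + 1), T m) → Projectivization ℂ (Fin (n + 1) → ℂ) :=
    fun s => Projectivization.mk ℂ (ww k n hn lam hk0 s.1 (fun p => (s.2 p : ℂ)))
      (ww_ne k n hn lam hk0 hl0 hl1 hinj s.1 _)
  have hroot : ∀ (m : Fin (n+1)) (ζ : T m) p, ((ζ p : ℂ)) ^ k = 1 := by
    intro m ζ p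
    have := (ζ p).2
    rwa [mem_nthRootsFinset hk0] at this
  have hmem : ∀ s, F s ∈ S := by
    rintro ⟨m, ζ⟩
    exact ⟨ww k n hn lam hk0 m (fun p => (ζ p : ℂ)),
      ww_ne k n hn lam hk0 hl0 hl1 hinj m _,
      ww_sol k n hn lam hk0 m _ (hroot m ζ), ⟨m, ww_m k n hn lam hk0 m _⟩, rfl⟩
  let F' : (Σ m : Fin (n + 1), T m) → S := fun s => ⟨F s, hmem s⟩
  have hinjF : Function.Injective F' := by
    rintro ⟨m, ζ⟩ ⟨m', ζ'⟩ hEq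
    have hEq' : F ⟨m, ζ⟩ = F ⟨m', ζ'⟩ := congrArg Subtype.val hEq
    rw [Projectivization.mk_eq_mk_iff] at hEq'
    obtain ⟨a, ha⟩ := hEq'
    -- w := ww m ζ, w' := ww m' ζ', a • w' = w
    have hwm' : ww k n hn lam hk0 m (fun p => (ζ p : ℂ)) m' = 0 := by
      have := congrFun ha m'
      simp only [Pi.smul_apply, Units.smul_def, smul_eq_mul] at this
      rw [← this, ww_m, mul_zero]
    have hmm : m' = m :=
      unique_zero k n hn lam hk0 hl0 hl1 hinj
        (ww_sol k n hn lam hk0 m _ (hroot m ζ))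
        (ww_ne k n hn lam hk0 hl0 hl1 hinj m _) hwm' (ww_m k n hn lam hk0 m _)
    subst hmm
    -- now a • w' = w with same m'
    have hr1 : rr k n lam hk0 (m' : ℕ) ((idx1 n hn m' : ℕ)) ≠ 0 :=
      rr_ne k n lam hk0 hl0 hl1 hinj (by omega) (by omega)
        (fun hc => idx1_ne n hn m' (Fin.ext hc))
    have ha1 : (a : ℂ) = 1 := by
      have h2 := congrFun ha (idx1 n hn m')
      simp only [Pi.smul_apply, Units.smul_def, smul_eq_mul] at h2
      rw [ww_idx1, ww_idx1] at h2
      have h3 : (a : ℂ) * rr k n lam hk0 (↑m') ↑(idx1 n hn m') =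
          1 * rr k n lam hk0 (↑m') ↑(idx1 n hn m') := by rw [one_mul]; exact h2
      exact mul_right_cancel₀ hr1 h3
    have hwe : ww k n hn lam hk0 m' (fun p => (ζ' p : ℂ)) =
        ww k n hn lam hk0 m' (fun p => (ζ p : ℂ)) := by
      funext i
      have := congrFun ha i
      simp only [Pi.smul_apply, Units.smul_def, smul_eq_mul, ha1, one_mul] at this
      exact this
    have hz : ζ = ζ' := by
      funext p
      have := congrFun hwe p.1
      unfold GF.ww at this
      rw [dif_pos p.2, dif_pos p.2] at this
      have hrp : rr k n lam hk0 (m' : ℕ) ((p : Fin (n+1)) : ℕ) ≠ 0 :=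
        rr_ne k n lam hk0 hl0 hl1 hinj (by omega) (by omega)
          (fun hc => p.2.1 (Fin.ext hc))
      apply Subtype.ext
      exact mul_right_cancel₀ hrp this.symm
    exact congrArg (Sigma.mk _) hz
  have hsurF : Function.Surjective F' := by
    rintro ⟨p, x, hx, hsol, ⟨m, hxm⟩, rfl⟩
    have H := (sol_iff k n hn lam x).mp hsol
    -- kernel parametrization
    have em : (0 : ℂ) = cc0 n lam (m : ℕ) * x ⟨0, by omega⟩ ^ k + cc1 (m : ℕ) * x ⟨1, by omega⟩ ^ k := by
      have := H m; rw [hxm, zero_pow (by omega)] at this; exact this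
    have hker : ∃ t : ℂ, x ⟨0, by omega⟩ ^ k = t * cc1 (m : ℕ) ∧
        x ⟨1, by omega⟩ ^ k = -(t * cc0 n lam (m : ℕ)) := by
      by_cases hc : cc0 n lam (m : ℕ) = 0
      · have hc1 : cc1 (m : ℕ) ≠ 0 := by
          unfold GF.cc1
          unfold GF.cc0 at hc
          split_ifs at hc ⊢ <;> norm_num at hc <;> norm_num
        refine ⟨x ⟨0, by omega⟩ ^ k / cc1 (m : ℕ), by field_simp, ?_⟩
        rw [hc]
        have h2 : cc1 (m : ℕ) * x ⟨1, by omega⟩ ^ k = 0 := by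
          linear_combination -em - x ⟨0, by omega⟩ ^ k * hc
        rcases mul_eq_zero.mp h2 with h | h
        · exact absurd h hc1
        · rw [h]; ring
      · refine ⟨-(x ⟨1, by omega⟩ ^ k / cc0 n lam (m : ℕ)), ?_, by field_simp⟩
        have em2 := em
        simp only [Fin.mk_zero, Fin.mk_one] at em2 ⊢
        field_simp
        linear_combination -em2
    obtain ⟨t, ht0, ht1⟩ := hker
    have hpow : ∀ i : Fin (n + 1), x i ^ k = t * dd n lam (m : ℕ) (i : ℕ) := by
      intro i
      rw [H i, ht0, ht1]
      unfold GF.dd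
      ring
    have hone : ∀ i : Fin (n + 1), i ≠ m → x i ≠ 0 := by
      intro i hi hz
      exact hi (unique_zero k n hn lam hk0 hl0 hl1 hinj hsol hx hz hxm)
    set i1 := idx1 n hn m with hi1
    have hx1 : x i1 ≠ 0 := hone i1 (idx1_ne n hn m)
    have hd1 : dd n lam (m : ℕ) ((i1 : ℕ)) ≠ 0 :=
      dd_ne n lam hl0 hl1 hinj (by omega) (by omega)
        (fun hc => idx1_ne n hn m (Fin.ext hc))
    have hr1 : rr k n lam hk0 (m : ℕ) ((i1 : ℕ)) ≠ 0 :=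
      rr_ne k n lam hk0 hl0 hl1 hinj (by omega) (by omega)
        (fun hc => idx1_ne n hn m (Fin.ext hc))
    have ht : t ≠ 0 := by
      intro h
      apply hx1
      have := hpow i1
      rw [h, zero_mul] at this
      exact pow_eq_zero_iff (by omega) |>.mp this
    set s := rr k n lam hk0 (m : ℕ) ((i1 : ℕ)) / x i1 with hs
    have hs0 : s ≠ 0 := div_ne_zero hr1 hx1
    have hsk : s ^ k * t = 1 := by
      rw [hs, div_pow, rr_pow, hpow i1]
      field_simp
    -- the root data
    have hζmem : ∀ (i : Fin (n + 1)), i ≠ m → (s * x i / rr k n lam hk0 (m : ℕ) (i : ℕ)) ∈ nthRootsFinset k (1 : ℂ) := by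
      intro i him
      have hri : rr k n lam hk0 (m : ℕ) (i : ℕ) ≠ 0 :=
        rr_ne k n lam hk0 hl0 hl1 hinj (by omega) (by omega)
          (fun hc => him (Fin.ext hc))
      rw [mem_nthRootsFinset hk0]
      rw [div_pow, mul_pow, hpow i, rr_pow]
      have hdi : dd n lam (m : ℕ) (i : ℕ) ≠ 0 :=
        dd_ne n lam hl0 hl1 hinj (by omega) (by omega)
          (fun hc => him (Fin.ext hc))
      field_simp
      linear_combination hsk
    let ζ : T m := fun p => ⟨s * x p.1 / rr k n lam hk0 (m : ℕ) ((p : Fin (n+1)) : ℕ),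
      hζmem p.1 p.2.1⟩
    refine ⟨⟨m, ζ⟩, ?_⟩
    apply Subtype.ext
    show F ⟨m, ζ⟩ = Projectivization.mk ℂ x hx
    have hwsx : ww k n hn lam hk0 m (fun p => (ζ p : ℂ)) = s • x := by
      funext i
      simp only [Pi.smul_apply, smul_eq_mul]
      unfold GF.ww
      by_cases him : i = m
      · subst him
        rw [dif_neg (by tauto), rr_self, mul_zero, hxm, mul_zero]
      · by_cases hii : i = i1
        · subst hii
          rw [dif_neg (by tauto), one_mul, hs]
          field_simp
        · rw [dif_pos ⟨him, hii⟩]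
          show s * x i / rr k n lam hk0 (m : ℕ) (i : ℕ) * rr k n lam hk0 (m : ℕ) (i : ℕ) = s * x i
          have hri : rr k n lam hk0 (m : ℕ) (i : ℕ) ≠ 0 :=
            rr_ne k n lam hk0 hl0 hl1 hinj (by omega) (by omega)
              (fun hc => him (Fin.ext hc))
          field_simp
    show Projectivization.mk ℂ _ _ = Projectivization.mk ℂ x hx
    rw [Projectivization.mk_eq_mk_iff']
    exact ⟨s, hwsx.symm⟩
  have hbij : Function.Bijective F' := ⟨hinjF, hsurF⟩
  let e := Equiv.ofBijective F' hbij
  have hfin : S.Finite := by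
    have : Finite ↥S := Finite.of_equiv _ e
    exact Set.finite_coe_iff.mp this
  refine ⟨hfin, ?_⟩
  have hprim : IsPrimitiveRoot (Complex.exp (2 * Real.pi * Complex.I / k)) k :=
    Complex.isPrimitiveRoot_exp k (by omega)
  have hcardroots : Fintype.card (nthRootsFinset k (1 : ℂ)) = k := by
    rw [Fintype.card_coe, hprim.card_nthRootsFinset]
  have hcardsub : ∀ m : Fin (n + 1),
      Fintype.card {i : Fin (n + 1) // i ≠ m ∧ i ≠ idx1 n hn m} = n - 1 := by
    intro m
    have hne : idx1 n hn m ≠ m := idx1_ne n hn m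
    rw [Fintype.card_subtype]
    have : Finset.filter (fun i => i ≠ m ∧ i ≠ idx1 n hn m) Finset.univ
        = Finset.univ \ {m, idx1 n hn m} := by
      ext i
      simp [and_comm]
      try tauto
    rw [this, Finset.card_sdiff_of_subset (Finset.subset_univ _)]
    rw [Finset.card_insert_of_notMem (by simpa using hne.symm), Finset.card_singleton]
    simp
    try omega
  have hcardT : ∀ m : Fin (n + 1), Fintype.card (T m) = k ^ (n - 1) := by
    intro m
    rw [Fintype.card_fun, hcardroots, hcardsub]
  have hcardsig : Fintype.card (Σ m : Fin (n + 1), T m) = (n + 1) * k ^ (n - 1) := by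
    rw [Fintype.card_sigma]
    simp only [hcardT]
    rw [Finset.sum_const, Finset.card_univ, Fintype.card_fin, smul_eq_mul]
  calc S.ncard = Nat.card ↥S := (Nat.card_coe_set_eq S).symm
    _ = Nat.card (Σ m : Fin (n + 1), T m) := (Nat.card_congr e).symm
    _ = Fintype.card (Σ m : Fin (n + 1), T m) := Nat.card_eq_fintype_card
    _ = (n + 1) * k ^ (n - 1) := hcardsig
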